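/- Under the staging transformation, the ring polymer spring potential diagonalizes: Σ_{i=1}^{N} (q_i - q_{i+1})²/2 = Σ_{k=2}^{N} (m_k/2) u_k² with m_k = k/(k-1), where u is the image of q under the staging map and q_{N+1} = q_1. -/

import Mathlib

/-- The staging transformation: `u_1 = q_1`,
`u_k = q_k - ((k-1) q_{k+1} + q_1)/k` for `k = 2, …, N`, with `q_{N+1} = q_1`.
Indices `k = 1, …, N` are represented by `i : Fin N` with `k = i + 1`. -/
noncomputable def stagingT (N : ℕ) [NeZero N] (q : Fin N → ℝ) : Fin N → ℝ :=
  fun i =>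
    if i.val = 0 then q 0
    else q i - ((i.val : ℝ) * q (i + 1) + q 0) / ((i.val : ℝ) + 1)

open Fin.NatCast

lemma staging_aux (g : ℕ → ℝ) (hg : g 0 = 0) :
    ∀ n, 1 ≤ n →
      ∑ j ∈ Finset.range n, (g j - g (j+1))^2/2 =
        (∑ j ∈ Finset.Ico 1 n,
            ((j:ℝ)+1)/(j:ℝ)/2 * (g j - (j:ℝ) * g (j+1)/((j:ℝ)+1))^2)
          + (g n)^2/(2*n) := by
  intro n hn
  induction n, hn using Nat.le_induction with
  | base => simp [hg]
  | succ n hn ih =>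
      rw [Finset.sum_range_succ, ih, Finset.sum_Ico_succ_top hn]
      have h1 : (n:ℝ) ≠ 0 := Nat.cast_ne_zero.mpr (by omega)
      have h2 : (n:ℝ) + 1 ≠ 0 := by positivity
      push_cast
      field_simp
      ring

/-- Under the staging transformation the spring potential diagonalizes:
`∑_{i=1}^N (q_i - q_{i+1})²/2 = ∑_{k=2}^N (m_k/2) u_k²` with `m_k = k/(k-1)`,
where `u = stagingT N q` and `q_{N+1} = q_1`. -/
theorem stmt5 (N : ℕ) [NeZero N] (hN : 2 ≤ N) (q : Fin N → ℝ) :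
    ∑ i : Fin N, (q i - q (i + 1)) ^ 2 / 2 =
      ∑ i ∈ Finset.univ.filter (fun i : Fin N => 1 ≤ i.val),
        (((i.val : ℝ) + 1) / (i.val : ℝ)) / 2 * (stagingT N q i) ^ 2 := by
  set f : ℕ → ℝ := fun j => q ((j : ℕ) : Fin N) with hf
  have hfval : ∀ i : Fin N, q i = f i.val := by
    intro i; simp [hf, Fin.cast_val_eq_self]
  have hsucc : ∀ i : Fin N, q (i + 1) = f (i.val + 1) := by
    intro i
    have h1 : ((i.val + 1 : ℕ) : Fin N) = i + 1 := by
      push_cast [Fin.cast_val_eq_self]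
      rfl
    simp [hf, h1]
  set g : ℕ → ℝ := fun j => f j - f 0 with hgdef
  have hg0 : g 0 = 0 := by simp [hgdef]
  have hgN : g N = 0 := by
    simp [hgdef, hf, Fin.natCast_self]
  -- rewrite LHS
  have hL : ∑ i : Fin N, (q i - q (i + 1)) ^ 2 / 2
      = ∑ j ∈ Finset.range N, (g j - g (j+1))^2/2 := by
    rw [← Fin.sum_univ_eq_sum_range (fun j => (g j - g (j+1))^2/2) N]
    refine Finset.sum_congr rfl fun i _ => ?_
    rw [hfval i, hsucc i]
    simp [hgdef]
  -- rewrite RHS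
  have hR : ∑ i ∈ Finset.univ.filter (fun i : Fin N => 1 ≤ i.val),
        (((i.val : ℝ) + 1) / (i.val : ℝ)) / 2 * (stagingT N q i) ^ 2
      = ∑ j ∈ Finset.Ico 1 N,
          ((j:ℝ)+1)/(j:ℝ)/2 * (g j - (j:ℝ) * g (j+1)/((j:ℝ)+1))^2 := by
    rw [Finset.sum_filter]
    have step : (∑ i : Fin N, if 1 ≤ i.val then
          (((i.val : ℝ) + 1) / (i.val : ℝ)) / 2 * (stagingT N q i) ^ 2 else 0)
        = ∑ i : Fin N, (fun j : ℕ => if 1 ≤ j then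
          ((j:ℝ)+1)/(j:ℝ)/2 * (g j - (j:ℝ) * g (j+1)/((j:ℝ)+1))^2 else 0) i.val := by
      refine Finset.sum_congr rfl fun i _ => ?_
      beta_reduce
      by_cases h : 1 ≤ i.val
      · rw [if_pos h, if_pos h]
        have hne : i.val ≠ 0 := by omega
        have hj1 : ((i.val : ℝ) + 1) ≠ 0 := by positivity
        have hq0 : q 0 = f 0 := by simp [hf]
        rw [stagingT, if_neg hne, hfval i, hsucc i, hq0]
        have he : f i.val - ((i.val : ℝ) * f (i.val + 1) + f 0) / ((i.val : ℝ) + 1)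
            = g i.val - (i.val : ℝ) * g (i.val + 1) / ((i.val : ℝ) + 1) := by
          simp only [hgdef]
          field_simp
          ring
        rw [he]
      · rw [if_neg h, if_neg h]
    rw [step, Fin.sum_univ_eq_sum_range
      (fun j : ℕ => if 1 ≤ j then
        ((j:ℝ)+1)/(j:ℝ)/2 * (g j - (j:ℝ) * g (j+1)/((j:ℝ)+1))^2 else 0) N]
    rw [Finset.range_eq_Ico,
        ← Finset.sum_Ico_consecutive _ (by omega : (0:ℕ) ≤ 1) (by omega : 1 ≤ N)]
    have h01 : ∑ j ∈ Finset.Ico (0:ℕ) 1,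
        (if 1 ≤ j then
          ((j:ℝ)+1)/(j:ℝ)/2 * (g j - (j:ℝ) * g (j+1)/((j:ℝ)+1))^2 else 0) = 0 := by
      simp
    rw [h01, zero_add]
    refine Finset.sum_congr rfl fun j hj => ?_
    rw [if_pos (Finset.mem_Ico.mp hj).1]
  rw [hL, hR, staging_aux g hg0 N (by omega), hgN]
  simp
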